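/- (Lemma 2: normal vector to the rate region boundary.) Let x* ∈ B, and define b_i(x) = (1/(L_i N̄_i)) ((N̄_i − 1)/∏_{j=1}^n (1 + x_j) + 1/(1 + x_i)). Then for every k ∈ {1,…,n}, ∑_{i=1}^n b_i(x*) · ∂s_i(x, N̄)/∂x_k evaluated at x = x* equals 0; i.e., b(x*) is normal to the boundary surface {s(x, N̄) : x ∈ B} at s(x*, N̄). -/

import Mathlib

open Finset

noncomputable def Xfun (n : ℕ) (a : ℝ) (x N : Fin n → ℝ) : ℝ :=
  a + (∑ k, (N k - 1) * x k) + (∏ k, (1 + x k)) - 1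

noncomputable def sVec (n : ℕ) (a : ℝ) (L x N : Fin n → ℝ) : Fin n → ℝ :=
  fun i => N i * L i * x i / Xfun n a x N

noncomputable def hfun (n : ℕ) (a : ℝ) (x : Fin n → ℝ) : ℝ :=
  (∑ i, x i / (1 + x i)) + (1 - a) / ∏ j, (1 + x j)

noncomputable def bvec (n : ℕ) (L Nhi x : Fin n → ℝ) (i : Fin n) : ℝ :=
  (1 / (L i * Nhi i)) * ((Nhi i - 1) / (∏ j, (1 + x j)) + 1 / (1 + x i))

theorem stmt13 (n : ℕ) (hn : 2 ≤ n) (a : ℝ) (ha0 : 0 < a) (ha1 : a < 1)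
    (L Nhi : Fin n → ℝ) (hL : ∀ i, 0 < L i) (hNhi : ∀ i, 1 ≤ Nhi i)
    (xs : Fin n → ℝ) (hxs : ∀ i, 0 ≤ xs i) (hB : hfun n a xs = 1) :
    ∀ k : Fin n,
      ∑ i, bvec n L Nhi xs i *
        deriv (fun t : ℝ => sVec n a L (Function.update xs k t) Nhi i) (xs k) = 0 := by
  intro k
  have h1x : ∀ i, (0:ℝ) < 1 + xs i := fun i => by linarith [hxs i]
  have hP : (0:ℝ) < ∏ j, (1 + xs j) := Finset.prod_pos fun j _ => h1x j
  have hP1 : (1:ℝ) ≤ ∏ j, (1 + xs j) := by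
    have := Finset.prod_le_prod (s := univ) (f := fun _ : Fin n => (1:ℝ))
      (g := fun j => 1 + xs j) (fun j _ => zero_le_one) (fun j _ => by linarith [hxs j])
    simpa using this
  have hSnn : (0:ℝ) ≤ ∑ i, (Nhi i - 1) * xs i :=
    Finset.sum_nonneg fun i _ => mul_nonneg (by linarith [hNhi i]) (hxs i)
  have hXv : (0:ℝ) < Xfun n a xs Nhi := by
    unfold Xfun; linarith
  set P : ℝ := ∏ j, (1 + xs j) with hPdef
  set Xv : ℝ := Xfun n a xs Nhi with hXvdef
  set Q : ℝ := ∏ j ∈ univ.erase k, (1 + xs j) with hQdef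
  have hQ : (0:ℝ) < Q := Finset.prod_pos fun j _ => h1x j
  have hPQ : P = (1 + xs k) * Q := (Finset.mul_prod_erase univ _ (Finset.mem_univ k)).symm
  set S' : ℝ := ∑ j ∈ univ.erase k, (Nhi j - 1) * xs j with hS'def
  -- derivative of X along coordinate k
  have heq : ∀ t : ℝ, Xfun n a (Function.update xs k t) Nhi
      = a + ((Nhi k - 1) * t + S') + (1 + t) * Q - 1 := by
    intro t
    unfold Xfun
    rw [← Finset.add_sum_erase univ _ (Finset.mem_univ k),
        ← Finset.mul_prod_erase univ _ (Finset.mem_univ k)]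
    have hs : ∑ j ∈ univ.erase k, (Nhi j - 1) * Function.update xs k t j = S' :=
      Finset.sum_congr rfl fun j hj => by
        rw [Function.update_of_ne (Finset.ne_of_mem_erase hj)]
    have hp : ∏ j ∈ univ.erase k, (1 + Function.update xs k t j) = Q :=
      Finset.prod_congr rfl fun j hj => by
        rw [Function.update_of_ne (Finset.ne_of_mem_erase hj)]
    rw [Function.update_self, hs, hp]
  have hXd : HasDerivAt (fun t => Xfun n a (Function.update xs k t) Nhi)
      ((Nhi k - 1) + Q) (xs k) := by
    have h1 : HasDerivAt (fun t : ℝ => a + ((Nhi k - 1) * t + S') + (1 + t) * Q - 1)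
        ((Nhi k - 1) * 1 + 1 * Q) (xs k) := by
      have hA : HasDerivAt (fun t : ℝ => (Nhi k - 1) * t) ((Nhi k - 1) * 1) (xs k) :=
        (hasDerivAt_id _).const_mul _
      have hBd : HasDerivAt (fun t : ℝ => 1 + t) 1 (xs k) :=
        (hasDerivAt_id (xs k)).const_add 1
      exact (((hA.add_const S').const_add a).add (hBd.mul_const Q)).sub_const 1
    have h2 : (fun t => Xfun n a (Function.update xs k t) Nhi)
        = fun t : ℝ => a + ((Nhi k - 1) * t + S') + (1 + t) * Q - 1 := funext heq
    rw [h2]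
    simpa using h1
  -- derivative of each s_i
  have hderiv : ∀ i : Fin n,
      deriv (fun t : ℝ => sVec n a L (Function.update xs k t) Nhi i) (xs k)
        = ((if i = k then Nhi i * L i else 0) * Xv
            - Nhi i * L i * xs i * ((Nhi k - 1) + Q)) / Xv ^ 2 := by
    intro i
    have hnum : HasDerivAt (fun t : ℝ => Nhi i * L i * Function.update xs k t i)
        (if i = k then Nhi i * L i else 0) (xs k) := by
      by_cases h : i = k
      · subst h
        simp only [if_pos rfl]
        have he : (fun t : ℝ => Nhi i * L i * Function.update xs i t i)
            = fun t : ℝ => Nhi i * L i * t := by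
          funext t; rw [Function.update_self]
        rw [he]
        simpa using (hasDerivAt_id (xs i)).const_mul (Nhi i * L i)
      · simp only [if_neg h]
        have he : (fun t : ℝ => Nhi i * L i * Function.update xs k t i)
            = fun _ : ℝ => Nhi i * L i * xs i := by
          funext t; rw [Function.update_of_ne h]
        rw [he]
        exact hasDerivAt_const _ _
    have hXne : Xfun n a (Function.update xs k (xs k)) Nhi ≠ 0 := by
      rw [Function.update_eq_self]
      exact ne_of_gt hXv
    have hd := hnum.div hXd hXne
    have heqf : (fun t : ℝ => sVec n a L (Function.update xs k t) Nhi i)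
        = fun t : ℝ => (Nhi i * L i * Function.update xs k t i)
            / Xfun n a (Function.update xs k t) Nhi := rfl
    rw [heqf, show (fun t : ℝ => (Nhi i * L i * Function.update xs k t i)
            / Xfun n a (Function.update xs k t) Nhi)
        = (fun t : ℝ => Nhi i * L i * Function.update xs k t i)
            / (fun t : ℝ => Xfun n a (Function.update xs k t) Nhi) from rfl,
      hd.deriv, Function.update_eq_self]
  -- key identity for b_i * N_i * L_i
  have hkey : ∀ i : Fin n, bvec n L Nhi xs i * (Nhi i * L i)
      = (Nhi i - 1) / P + 1 / (1 + xs i) := by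
    intro i
    unfold bvec
    rw [← hPdef]
    have hPne := hP.ne'
    have hLi := (hL i).ne'
    have hNi : Nhi i ≠ 0 := by have := hNhi i; linarith
    field_simp
  -- boundary identity
  have hBsum : ∑ i, xs i / (1 + xs i) = 1 - (1 - a) / P := by
    have := hB
    unfold hfun at this
    rw [← hPdef] at this
    linarith
  have hsum2 : ∑ i, bvec n L Nhi xs i * (Nhi i * L i * xs i) = Xv / P := by
    have hterm : ∀ i ∈ univ, bvec n L Nhi xs i * (Nhi i * L i * xs i)
        = ((Nhi i - 1) * xs i) / P + xs i / (1 + xs i) := by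
      intro i _
      have h1 : bvec n L Nhi xs i * (Nhi i * L i * xs i)
          = (bvec n L Nhi xs i * (Nhi i * L i)) * xs i := by ring
      rw [h1, hkey i]
      have := (h1x i).ne'
      field_simp
    rw [Finset.sum_congr rfl hterm, Finset.sum_add_distrib, ← Finset.sum_div, hBsum]
    have hXv2 : Xv = a + (∑ i, (Nhi i - 1) * xs i) + P - 1 := rfl
    rw [hXv2]
    field_simp
    ring
  -- put it together
  rw [Finset.sum_congr rfl fun i _ => by rw [hderiv i]]
  have hterm2 : ∀ i ∈ univ,
      bvec n L Nhi xs i * (((if i = k then Nhi i * L i else 0) * Xv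
          - Nhi i * L i * xs i * ((Nhi k - 1) + Q)) / Xv ^ 2)
      = ((if i = k then bvec n L Nhi xs k * (Nhi k * L k) * Xv else 0)
          - (bvec n L Nhi xs i * (Nhi i * L i * xs i)) * ((Nhi k - 1) + Q)) / Xv ^ 2 := by
    intro i _
    by_cases h : i = k
    · subst h; simp only [eq_self_iff_true, if_true]; ring
    · simp only [if_neg h]; ring
  rw [Finset.sum_congr rfl hterm2, ← Finset.sum_div]
  rw [div_eq_zero_iff]
  left
  rw [Finset.sum_sub_distrib, ← Finset.sum_mul, hsum2, Finset.sum_ite_eq' univ k]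
  simp only [Finset.mem_univ, if_true]
  rw [hkey k, hPQ]
  have h1k := (h1x k).ne'
  have hQne := hQ.ne'
  field_simp
  ring
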